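/- Let q be a prime power, n a positive integer, A ∈ F_q^{n×n} a matrix of rank r, and for uniformly random u, v ∈ F_q^n let D(r), U(r), N(r) denote respectively the probabilities that rank(A + u v^T) equals r − 1, r + 1, and r. Then N(r) = 1 − D(r) − U(r) ≥ (2q^n − 1)/q^{2n}, with equality when r = 0. -/

import Mathlib

open Matrix

section aux
variable {n : ℕ} {F : Type} [Field F]

lemma aux_rank_add_le (A B : Matrix (Fin n) (Fin n) F) :
    (A + B).rank ≤ A.rank + B.rank := by
  have h : LinearMap.range (A + B).mulVecLin ≤
      LinearMap.range A.mulVecLin ⊔ LinearMap.range B.mulVecLin := by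
    rw [Matrix.mulVecLin_add]
    rintro x ⟨y, rfl⟩
    exact Submodule.mem_sup.mpr ⟨A.mulVecLin y, ⟨y, rfl⟩, B.mulVecLin y, ⟨y, rfl⟩, rfl⟩
  exact le_trans (Submodule.finrank_mono h)
    (Submodule.finrank_add_le_finrank_add_finrank _ _)

lemma aux_rank_vecMulVec_le (u v : Fin n → F) :
    (Matrix.vecMulVec u v).rank ≤ 1 := by
  rw [Matrix.vecMulVec_eq (Fin 1)]
  calc (Matrix.replicateCol (Fin 1) u * Matrix.replicateRow (Fin 1) v).rank
      ≤ (Matrix.replicateRow (Fin 1) v).rank := Matrix.rank_mul_le_right _ _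
    _ ≤ Fintype.card (Fin 1) := Matrix.rank_le_card_height _
    _ = 1 := Fintype.card_fin 1

lemma aux_eq_zero_of_rank_eq_zero {A : Matrix (Fin n) (Fin n) F} (h : A.rank = 0) :
    A = 0 := by
  rw [Matrix.rank, Submodule.finrank_eq_zero, LinearMap.range_eq_bot] at h
  ext i j
  have := congrFun (LinearMap.congr_fun h (Pi.single j 1)) i
  simpa [Matrix.mulVecLin_apply] using this

lemma aux_vecMulVec_eq_zero_iff {u v : Fin n → F} :
    Matrix.vecMulVec u v = 0 ↔ u = 0 ∨ v = 0 := by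
  constructor
  · intro h
    by_cases hu : u = 0
    · exact Or.inl hu
    · right
      obtain ⟨i, hi⟩ := Function.ne_iff.mp hu
      simp only [Pi.zero_apply] at hi
      ext j
      have := congrFun (congrFun h i) j
      simp only [Matrix.vecMulVec_apply, Matrix.zero_apply] at this
      exact (mul_eq_zero.mp this).resolve_left hi
  · rintro (rfl | rfl) <;> ext i j <;> simp [Matrix.vecMulVec_apply]

end aux

theorem stmt15 (F : Type) [Field F] [Fintype F] (n r : ℕ) (hn : 0 < n)
    (A : Matrix (Fin n) (Fin n) F) (hr : A.rank = r)
    (D U N : ℚ)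
    (hD : D = (Nat.card {uv : (Fin n → F) × (Fin n → F) //
        ((A + Matrix.vecMulVec uv.1 uv.2).rank : ℤ) = (r : ℤ) - 1} : ℚ) /
        (Fintype.card F : ℚ) ^ (2 * n))
    (hU : U = (Nat.card {uv : (Fin n → F) × (Fin n → F) //
        (A + Matrix.vecMulVec uv.1 uv.2).rank = r + 1} : ℚ) /
        (Fintype.card F : ℚ) ^ (2 * n))
    (hN : N = (Nat.card {uv : (Fin n → F) × (Fin n → F) //
        (A + Matrix.vecMulVec uv.1 uv.2).rank = r} : ℚ) /
        (Fintype.card F : ℚ) ^ (2 * n)) :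
    N = 1 - D - U ∧
    (2 * (Fintype.card F : ℚ) ^ n - 1) / (Fintype.card F : ℚ) ^ (2 * n) ≤ N ∧
    (r = 0 → N = (2 * (Fintype.card F : ℚ) ^ n - 1) / (Fintype.card F : ℚ) ^ (2 * n)) := by
  classical
  set q : ℕ := Fintype.card F with hq
  have hq0 : 0 < q := Fintype.card_pos
  have hqQ : (0 : ℚ) < (q : ℚ) ^ (2 * n) := by positivity
  set S := ((Fin n → F) × (Fin n → F))
  set Pm : S → Prop := fun uv => ((A + Matrix.vecMulVec uv.1 uv.2).rank : ℤ) = (r : ℤ) - 1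
    with hPm
  set P0 : S → Prop := fun uv => (A + Matrix.vecMulVec uv.1 uv.2).rank = r with hP0
  set Pp : S → Prop := fun uv => (A + Matrix.vecMulVec uv.1 uv.2).rank = r + 1 with hPp
  -- rank changes by at most one
  have key : ∀ uv : S, r ≤ (A + Matrix.vecMulVec uv.1 uv.2).rank + 1 ∧
      (A + Matrix.vecMulVec uv.1 uv.2).rank ≤ r + 1 := by
    rintro ⟨u, v⟩
    constructor
    · have hneg : -Matrix.vecMulVec u v = Matrix.vecMulVec (-u) v := by
        ext i j; simp [Matrix.vecMulVec_apply]
      calc r = A.rank := hr.symm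
        _ = ((A + Matrix.vecMulVec u v) + -Matrix.vecMulVec u v).rank := by
            rw [add_neg_cancel_right]
        _ ≤ (A + Matrix.vecMulVec u v).rank + (-Matrix.vecMulVec u v).rank :=
            aux_rank_add_le _ _
        _ ≤ (A + Matrix.vecMulVec u v).rank + 1 := by
            rw [hneg]; exact Nat.add_le_add_left (aux_rank_vecMulVec_le _ _) _
    · calc (A + Matrix.vecMulVec u v).rank ≤ A.rank + (Matrix.vecMulVec u v).rank :=
          aux_rank_add_le _ _
        _ ≤ r + 1 := by rw [hr]; exact Nat.add_le_add_left (aux_rank_vecMulVec_le _ _) _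
  have cover : ∀ uv : S, Pm uv ∨ P0 uv ∨ Pp uv := by
    intro uv
    obtain ⟨h1, h2⟩ := key uv
    simp only [hPm, hP0, hPp]
    omega
  -- counting
  have hcardS : Fintype.card S = q ^ (2 * n) := by
    simp [S, Fintype.card_fun, hq, two_mul, pow_add]
  have hdisj1 : Disjoint (Finset.univ.filter Pm) (Finset.univ.filter P0) := by
    rw [Finset.disjoint_left]
    intro a ha hb
    simp only [Finset.mem_filter, hPm, hP0] at ha hb
    omega
  have hdisj2 : Disjoint (Finset.univ.filter Pm ∪ Finset.univ.filter P0)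
      (Finset.univ.filter Pp) := by
    rw [Finset.disjoint_left]
    intro a ha hb
    simp only [Finset.mem_union, Finset.mem_filter, hPm, hP0, hPp] at ha hb
    omega
  have hunion : (Finset.univ.filter Pm ∪ Finset.univ.filter P0) ∪ Finset.univ.filter Pp
      = Finset.univ := by
    ext a
    simp only [Finset.mem_union, Finset.mem_filter, Finset.mem_univ, true_and, iff_true]
    rcases cover a with h | h | h
    · exact Or.inl (Or.inl h)
    · exact Or.inl (Or.inr h)
    · exact Or.inr h
  have hsum : (Finset.univ.filter Pm).card + (Finset.univ.filter P0).card
      + (Finset.univ.filter Pp).card = q ^ (2 * n) := by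
    have h2 := Finset.card_union_of_disjoint hdisj2
    rw [hunion, Finset.card_univ, hcardS, Finset.card_union_of_disjoint hdisj1] at h2
    omega
  have hcm : Nat.card {uv : S // Pm uv} = (Finset.univ.filter Pm).card := by
    rw [Nat.card_eq_fintype_card, Fintype.card_subtype]
  have hc0 : Nat.card {uv : S // P0 uv} = (Finset.univ.filter P0).card := by
    rw [Nat.card_eq_fintype_card, Fintype.card_subtype]
  have hcp : Nat.card {uv : S // Pp uv} = (Finset.univ.filter Pp).card := by
    rw [Nat.card_eq_fintype_card, Fintype.card_subtype]
  have hDval : D = ((Finset.univ.filter Pm).card : ℚ) / (q : ℚ) ^ (2 * n) := by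
    rw [hD, ← hcm]
  have hUval : U = ((Finset.univ.filter Pp).card : ℚ) / (q : ℚ) ^ (2 * n) := by
    rw [hU, ← hcp]
  have hNval : N = ((Finset.univ.filter P0).card : ℚ) / (q : ℚ) ^ (2 * n) := by
    rw [hN, ← hc0]
  have hsumQ : ((Finset.univ.filter Pm).card : ℚ) + ((Finset.univ.filter P0).card : ℚ)
      + ((Finset.univ.filter Pp).card : ℚ) = (q : ℚ) ^ (2 * n) := by
    exact_mod_cast congrArg (Nat.cast : ℕ → ℚ) hsum
  -- the zero set
  set T : Finset S := ({0} : Finset (Fin n → F)) ×ˢ Finset.univ ∪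
      Finset.univ ×ˢ ({0} : Finset (Fin n → F)) with hT
  have hTmem : ∀ uv : S, uv ∈ T ↔ uv.1 = 0 ∨ uv.2 = 0 := by
    rintro ⟨u, v⟩
    rw [hT, Finset.mem_union, Finset.mem_product, Finset.mem_product]
    simp
  have hTcard : T.card + 1 = 2 * q ^ n := by
    have hinter : (({0} : Finset (Fin n → F)) ×ˢ Finset.univ) ∩
        (Finset.univ ×ˢ ({0} : Finset (Fin n → F)))
        = ({0} : Finset (Fin n → F)) ×ˢ ({0} : Finset (Fin n → F)) := by
      ext ⟨u, v⟩; simp; tauto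
    have := Finset.card_union_add_card_inter
      (({0} : Finset (Fin n → F)) ×ˢ Finset.univ)
      (Finset.univ ×ˢ ({0} : Finset (Fin n → F)))
    rw [hinter] at this
    simp only [Finset.card_product, Finset.card_singleton, Finset.card_univ,
      Fintype.card_fun, Fintype.card_fin, one_mul, mul_one] at this
    rw [← hq] at this
    rw [hT]
    omega
  have hTsub : T ⊆ Finset.univ.filter P0 := by
    intro uv huv
    rw [hTmem] at huv
    have hz : Matrix.vecMulVec uv.1 uv.2 = 0 := aux_vecMulVec_eq_zero_iff.mpr huv
    simp only [Finset.mem_filter, Finset.mem_univ, true_and, hP0]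
    rw [hz, add_zero, hr]
  have hTcardQ : (T.card : ℚ) = 2 * (q : ℚ) ^ n - 1 := by
    have := congrArg (Nat.cast : ℕ → ℚ) hTcard
    push_cast at this
    linarith
  refine ⟨?_, ?_, ?_⟩
  · rw [hDval, hUval, hNval]
    field_simp
    linarith
  · rw [hNval]
    have hle : (2 * (q : ℚ) ^ n - 1) ≤ ((Finset.univ.filter P0).card : ℚ) := by
      rw [← hTcardQ]
      exact_mod_cast Finset.card_le_card hTsub
    gcongr
  · intro hr0
    subst hr0
    have hA0 : A = 0 := aux_eq_zero_of_rank_eq_zero hr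
    have hfeq : Finset.univ.filter P0 = T := by
      ext uv
      simp only [Finset.mem_filter, Finset.mem_univ, true_and, hP0, hTmem, hA0, zero_add]
      constructor
      · intro h
        exact aux_vecMulVec_eq_zero_iff.mp (aux_eq_zero_of_rank_eq_zero h)
      · intro h
        rw [aux_vecMulVec_eq_zero_iff.mpr h, Matrix.rank_zero]
    rw [hNval, hfeq, hTcardQ]
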